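/- Let h₃ be the 3-dimensional Heisenberg algebra ([e₁,e₂]=e₃), D_l a bijective derivation of h₃ with semisimple part D_{l,s}, and (a, ⟨·,·⟩, D_a) a metric vector space with bijective skewsymmetric D_a, viewed as a trivial module. If α ∈ C²(h₃,a) satisfies D_s°α = 0 (built from the semisimple parts), then the subspace α(h₃, z(h₃)) spanned by values α(L, Z) with Z in the center z(h₃) = ℝe₃ is totally isotropic: ⟨α(h₃,z(h₃)), α(h₃,z(h₃))⟩ = 0. -/

import Mathlib

open Module Polynomial

namespace HeisenbergAux

variable {K V : Type*} [Field K] [AddCommGroup V] [Module K V]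

/-- Uniqueness direction of Jordan–Chevalley: any semisimple `S` commuting with `f`
with `f - S` nilpotent lies in the subalgebra generated by `f`. -/
lemma jordan_mem [PerfectField K] [FiniteDimensional K V] {f S : Module.End K V}
    (hS : S.IsSemisimple) (hnil : IsNilpotent (f - S)) (hc : Commute f S) :
    S ∈ Algebra.adjoin K {f} := by
  obtain ⟨n, hn, s, hs, hnnil, hsss, hf⟩ := Module.End.exists_isNilpotent_isSemisimple (f := f)
  have hSs : Commute S s := Algebra.commute_of_mem_adjoin_singleton_of_commute hs hc.symm
  have hSn : Commute S n := Algebra.commute_of_mem_adjoin_singleton_of_commute hn hc.symm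
  have hfn : Commute f n := Algebra.commute_of_mem_adjoin_self hn
  have hfs' : f - s = n := by rw [hf]; abel
  have hfs : Commute f s := Algebra.commute_of_mem_adjoin_self hs
  have hcomm : Commute (f - s) (f - S) :=
    ((Commute.refl f).sub_right hc).sub_left ((hfs.symm).sub_right hSs.symm)
  have hnilSs : IsNilpotent (S - s) := by
    have h1 : IsNilpotent (f - s) := hfs' ▸ hnnil
    have h2 := hcomm.isNilpotent_sub h1 hnil
    rwa [sub_sub_sub_cancel_left] at h2
  have hssSs : (S - s).IsSemisimple :=
    Module.End.IsSemisimple.sub_of_commute hSs hS hsss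
  have : S - s = 0 := Module.End.eq_zero_of_isNilpotent_isSemisimple hnilSs hssSs
  have : S = s := by rwa [sub_eq_zero] at this
  rwa [this]

variable {a : Type*} [AddCommGroup a] [Module K a] (B : LinearMap.BilinForm K a)

lemma pair_pow {F G : Module.End K a} (h : ∀ u v, B (F u) v = B u (G v)) :
    ∀ (k : ℕ) (u v : a), B ((F ^ k) u) v = B u ((G ^ k) v) := by
  intro k
  induction k with
  | zero => intro u v; simp
  | succ k ih =>
    intro u v
    rw [pow_succ F, pow_succ' G]
    calc B (((F ^ k) * F) u) v = B ((F ^ k) (F u)) v := rfl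
      _ = B (F u) ((G ^ k) v) := ih (F u) v
      _ = B u (G ((G ^ k) v)) := h u _
      _ = B u ((G * G ^ k) v) := rfl

lemma pair_aeval {F G : Module.End K a} (h : ∀ u v, B (F u) v = B u (G v)) :
    ∀ (q : K[X]) (u v : a), B ((aeval F q) u) v = B u ((aeval G q) v) := by
  intro q
  induction q using Polynomial.induction_on' with
  | add p q hp hq =>
    intro u v
    simp only [map_add, LinearMap.add_apply]
    rw [hp, hq]
  | monomial n r =>
    intro u v
    rw [aeval_monomial, aeval_monomial]
    simp only [Module.End.mul_apply, Module.algebraMap_end_apply, map_smul, LinearMap.smul_apply,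
      smul_eq_mul]
    rw [pair_pow B h n]

lemma eigen_pow {f : Module.End K V} {v : V} {t : K} (h : f v = t • v) :
    ∀ k : ℕ, (f ^ k) v = t ^ k • v := by
  intro k
  induction k with
  | zero => simp
  | succ k ih =>
    rw [pow_succ' f, pow_succ' t]
    calc (f * f ^ k) v = f ((f ^ k) v) := rfl
      _ = f (t ^ k • v) := by rw [ih]
      _ = t ^ k • (t • v) := by rw [map_smul, h]
      _ = (t * t ^ k) • v := by rw [smul_smul, mul_comm]

lemma eigen_aeval {f : Module.End K V} {v : V} {t : K} (h : f v = t • v) (q : K[X]) :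
    (aeval f q) v = q.eval t • v := by
  induction q using Polynomial.induction_on' with
  | add p q hp hq => simp only [map_add, LinearMap.add_apply, hp, hq, eval_add, add_smul]
  | monomial n r =>
    rw [aeval_monomial, eval_monomial]
    simp only [Module.End.mul_apply, Module.algebraMap_end_apply, eigen_pow h n, smul_smul]



lemma semisimple_part_skew [PerfectField K] [FiniteDimensional K a]
    (hBnd : B.Nondegenerate) {Da Das : Module.End K a}
    (hDaskew : ∀ u v, B (Da u) v = - B u (Da v))
    (hDass : Das.IsSemisimple) (hDanil : IsNilpotent (Da - Das)) (hDac : Commute Da Das) :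
    ∀ u v, B (Das u) v = - B u (Das v) := by
  have hmem := jordan_mem hDass hDanil hDac
  rw [Algebra.adjoin_singleton_eq_range_aeval] at hmem
  obtain ⟨p, hp0⟩ := hmem
  have hp : (aeval Da) p = Das := hp0
  set T : Module.End K a := aeval (-Da) p with hTdef
  have hF1 : ∀ u v, B (Da u) v = B u ((-Da) v) := by
    intro u v; rw [hDaskew]; simp
  have hF2 : ∀ u v, B ((-Da) u) v = B u (Da v) := by
    intro u v
    simp only [LinearMap.neg_apply, map_neg, LinearMap.neg_apply, hDaskew u v]
    ring
  have hA : ∀ u v, B (Das u) v = B u (T v) := by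
    intro u v; rw [← hp]; exact pair_aeval B hF1 p u v
  have hB' : ∀ u v, B (T u) v = B u (Das v) := by
    intro u v
    have := pair_aeval B hF2 p u v
    rwa [hp] at this
  -- commutation facts
  have hTmem : T ∈ Algebra.adjoin K {(-Da)} := by
    rw [Algebra.adjoin_singleton_eq_range_aeval]; exact ⟨p, rfl⟩
  have hcDaT : Commute Da T := by
    have h1 : Commute (-Da) T := Algebra.commute_of_mem_adjoin_self hTmem
    simpa using h1.neg_left
  have hcDasT : Commute Das T :=
    Algebra.commute_of_mem_adjoin_singleton_of_commute hTmem (hDac.symm.neg_right)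
  -- nilpotency of Da + T
  have h1 : ∀ w v', B ((Da + T) w) v' = B w ((-(Da - Das)) v') := by
    intro w v'
    simp only [LinearMap.add_apply, map_add, LinearMap.add_apply, LinearMap.neg_apply,
      LinearMap.sub_apply, map_neg, map_sub]
    rw [hDaskew w v', hB' w v']
    ring
  have hnilDaT : IsNilpotent (Da + T) := by
    obtain ⟨m, hm⟩ := hDanil
    refine ⟨m, ?_⟩
    ext w
    refine hBnd.1 _ fun v' => ?_
    rw [pair_pow B h1 m w v']
    rw [neg_pow, hm]
    simp
  -- T is semisimple
  have haevalT : aeval T (minpoly K Das) = 0 := by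
    ext w
    refine hBnd.1 _ fun v' => ?_
    rw [pair_aeval B hB' (minpoly K Das) w v', minpoly.aeval]
    simp
  have hTss : T.IsSemisimple :=
    Module.End.isSemisimple_of_squarefree_aeval_eq_zero hDass.minpoly_squarefree haevalT
  -- T + Das is nilpotent and semisimple, hence zero
  have hcomm : Commute (Da + T) (Da - Das) :=
    ((Commute.refl Da).sub_right hDac).add_left ((hcDaT.symm.sub_right hcDasT.symm))
  have hnilsum : IsNilpotent (T + Das) := by
    have h2 := hcomm.isNilpotent_sub hnilDaT hDanil
    have heq : (Da + T) - (Da - Das) = T + Das := by abel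
    rwa [heq] at h2
  have hsssum : (T + Das).IsSemisimple :=
    Module.End.IsSemisimple.add_of_commute hcDasT.symm hTss hDass
  have hzero : T + Das = 0 := Module.End.eq_zero_of_isNilpotent_isSemisimple hnilsum hsssum
  have hTeq : T = -Das := by
    rw [← sub_eq_zero]; rw [sub_neg_eq_add]; exact hzero
  intro u v
  rw [hA u v, hTeq]
  simp


end HeisenbergAux

open HeisenbergAux

/-- Let `h₃` be the 3-dimensional Heisenberg algebra (with basis
`e₀, e₁, e₂` satisfying `⁅e₀,e₁⁆ = e₂`, `⁅e₀,e₂⁆ = ⁅e₁,e₂⁆ = 0`), `D_l` a bijective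
derivation of `h₃` with semisimple part `D_{l,s}`, and `(a, B, D_a)` a metric vector
space with a bijective skewsymmetric `D_a` (semisimple part `D_{a,s}`), viewed as a
trivial module.  If the alternating bilinear map `α ∈ C²(h₃, a)` satisfies
`D_s°α = 0`, then the subspace `α(h₃, z(h₃))` of values on the center is totally
isotropic: `⟨α(h₃, z(h₃)), α(h₃, z(h₃))⟩ = 0`. -/
theorem heisenberg_alpha_center_isotropic
    {g a : Type*} [LieRing g] [LieAlgebra ℝ g] [FiniteDimensional ℝ g]
    [AddCommGroup a] [Module ℝ a] [FiniteDimensional ℝ a]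
    (e : Basis (Fin 3) ℝ g)
    (he01 : ⁅e 0, e 1⁆ = e 2) (he02 : ⁅e 0, e 2⁆ = 0) (he12 : ⁅e 1, e 2⁆ = 0)
    (B : LinearMap.BilinForm ℝ a) (hBnd : B.Nondegenerate) (hBsymm : B.IsSymm)
    (Dl Dls : Module.End ℝ g) (Da Das : Module.End ℝ a)
    (hDlbij : Function.Bijective Dl)
    (hDlder : ∀ x y : g, Dl ⁅x, y⁆ = ⁅Dl x, y⁆ + ⁅x, Dl y⁆)
    (hDabij : Function.Bijective Da)
    (hDaskew : ∀ u v : a, B (Da u) v = - B u (Da v))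
    (hDlss : Dls.IsSemisimple) (hDlnil : IsNilpotent (Dl - Dls)) (hDlc : Commute Dl Dls)
    (hDass : Das.IsSemisimple) (hDanil : IsNilpotent (Da - Das)) (hDac : Commute Da Das)
    (α : g →ₗ[ℝ] g →ₗ[ℝ] a) (hαalt : ∀ x : g, α x x = 0)
    (hDs : ∀ x y : g, Das (α x y) - α (Dls x) y - α x (Dls y) = 0) :
    ∀ x u : g, ∀ y ∈ LieAlgebra.center ℝ g, ∀ v ∈ LieAlgebra.center ℝ g,
      B (α x y) (α u v) = 0 := by
  -- basis expansion
  have hbasis : ∀ z : g, z = e.repr z 0 • e 0 + e.repr z 1 • e 1 + e.repr z 2 • e 2 := by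
    intro z
    have h := e.sum_repr z
    rw [Fin.sum_univ_three] at h
    exact h.symm
  have he2ne : e 2 ≠ (0 : g) := e.ne_zero 2
  -- bracket facts
  have hb10 : ⁅e 1, e 0⁆ = -(e 2) := by rw [← lie_skew, he01]
  have hb20 : ⁅e 2, e 0⁆ = (0 : g) := by rw [← lie_skew, he02, neg_zero]
  have hb21 : ⁅e 2, e 1⁆ = (0 : g) := by rw [← lie_skew, he12, neg_zero]
  have hbr0 : ∀ z : g, ⁅e 0, z⁆ = e.repr z 1 • e 2 := by
    intro z
    conv_lhs => rw [hbasis z]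
    simp [lie_add, lie_smul, he01, he02, lie_self]
  have hbr1 : ∀ z : g, ⁅e 1, z⁆ = -(e.repr z 0) • e 2 := by
    intro z
    conv_lhs => rw [hbasis z]
    simp [lie_add, lie_smul, hb10, he12, lie_self]
  have hbrR1 : ∀ z : g, ⁅z, e 1⁆ = e.repr z 0 • e 2 := by
    intro z
    conv_lhs => rw [hbasis z]
    simp [add_lie, smul_lie, he01, hb21, lie_self]
  -- the center is spanned by e 2
  have hcen : ∀ z ∈ LieAlgebra.center ℝ g, z = e.repr z 2 • e 2 := by
    intro z hz
    have hz' : ∀ x : g, ⁅x, z⁆ = 0 := (LieModule.mem_maxTrivSubmodule ℝ g g z).mp hz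
    have h0 : e.repr z 1 • e 2 = (0 : g) := by rw [← hbr0 z]; exact hz' (e 0)
    have h1 : -(e.repr z 0) • e 2 = (0 : g) := by rw [← hbr1 z]; exact hz' (e 1)
    have hz1 : e.repr z 1 = 0 := by
      rcases smul_eq_zero.mp h0 with h | h
      · exact h
      · exact absurd h he2ne
    have hz0 : e.repr z 0 = 0 := by
      rcases smul_eq_zero.mp h1 with h | h
      · simpa using h
      · exact absurd h he2ne
    conv_lhs => rw [hbasis z]
    rw [hz0, hz1]
    simp
  -- the eigenvalue of Dl on the center
  set c : ℝ := e.repr (Dl (e 0)) 0 + e.repr (Dl (e 1)) 1 with hcdef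
  have hDle2 : Dl (e 2) = c • e 2 := by
    have h : Dl ⁅e 0, e 1⁆ = ⁅Dl (e 0), e 1⁆ + ⁅e 0, Dl (e 1)⁆ := hDlder _ _
    rw [he01] at h
    rw [h, hbrR1, hbr0, ← add_smul]
  have hcne : c ≠ 0 := by
    intro h
    apply he2ne
    apply hDlbij.injective
    rw [hDle2, h, zero_smul, map_zero]
  -- Dls is a polynomial in Dl, and fixes the center with the same eigenvalue c
  obtain ⟨pl, hpl0⟩ : Dls ∈ ((aeval Dl).range : Subalgebra ℝ (Module.End ℝ g)) := by
    rw [← Algebra.adjoin_singleton_eq_range_aeval]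
    exact jordan_mem hDlss hDlnil hDlc
  have hpl : (aeval Dl) pl = Dls := hpl0
  have hDlse2' : Dls (e 2) = pl.eval c • e 2 := by
    rw [← hpl]; exact eigen_aeval hDle2 pl
  have hDlse2 : Dls (e 2) = c • e 2 := by
    obtain ⟨m, hm⟩ := hDlnil
    have heig : (Dl - Dls) (e 2) = (c - pl.eval c) • e 2 := by
      rw [LinearMap.sub_apply, hDle2, hDlse2', sub_smul]
    have h1 := eigen_pow heig m
    rw [hm] at h1
    have h2 : (c - pl.eval c) ^ m • e 2 = (0 : g) := by rw [← h1]; rfl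
    have h3 : (c - pl.eval c) ^ m = 0 := by
      rcases smul_eq_zero.mp h2 with h | h
      · exact h
      · exact absurd h he2ne
    have h4 : c - pl.eval c = 0 := by
      rcases Nat.eq_zero_or_pos m with hm0 | hm0
      · subst hm0; norm_num at h3
      · exact (pow_eq_zero_iff hm0.ne').mp h3
    have h5 : pl.eval c = c := by linarith
    rw [hDlse2', h5]
  -- trace computation
  have htrace : ∀ f : Module.End ℝ g,
      LinearMap.trace ℝ g f = e.repr (f (e 0)) 0 + e.repr (f (e 1)) 1 + e.repr (f (e 2)) 2 := by
    intro f
    rw [LinearMap.trace_eq_matrix_trace ℝ e, Matrix.trace_fin_three]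
    simp [LinearMap.toMatrix_apply]
  have htreq : LinearMap.trace ℝ g Dl = LinearMap.trace ℝ g Dls := by
    have h1 : IsNilpotent (LinearMap.trace ℝ g (Dl - Dls)) :=
      LinearMap.isNilpotent_trace_of_isNilpotent hDlnil
    have h2 : LinearMap.trace ℝ g (Dl - Dls) = 0 := h1.eq_zero
    rw [map_sub] at h2
    linarith
  have htr : e.repr (Dls (e 0)) 0 + e.repr (Dls (e 1)) 1 = c := by
    have t1 := htrace Dl
    have t2 := htrace Dls
    have t4 : e.repr (Dl (e 2)) 2 = c := by rw [hDle2]; simp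
    have t5 : e.repr (Dls (e 2)) 2 = c := by rw [hDlse2]; simp
    rw [t4, htreq, t2, t5] at t1
    rw [hcdef]
    linarith
  -- skewness of the semisimple part of Da
  have hskew : ∀ u v : a, B (Das u) v = - B u (Das v) :=
    semisimple_part_skew B hBnd hDaskew hDass hDanil hDac
  -- Das is injective
  have hDasinj : Function.Injective Das := by
    have h2 : IsUnit Da := (Module.End.isUnit_iff Da).mpr hDabij
    have h1 : IsNilpotent (-(Da - Das)) := hDanil.neg
    have h3 : Commute (-(Da - Das)) Da := (((Commute.refl Da).sub_right hDac).symm).neg_left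
    have h4 := h1.isUnit_add_right_of_commute h2 h3
    have h5 : -(Da - Das) + Da = Das := by abel
    rw [h5] at h4
    exact ((Module.End.isUnit_iff Das).mp h4).injective
  -- the maps S and E
  set S : g →ₗ[ℝ] a := α.flip (e 2) with hSdef
  have hSapp : ∀ z : g, S z = α z (e 2) := fun z => rfl
  set E : Module.End ℝ g := Dls + c • (1 : Module.End ℝ g) with hEdef
  have hEapp : ∀ z : g, E z = Dls z + c • z := by
    intro z
    simp [hEdef]
  have hkey : ∀ z : g, Das (S z) = S (E z) := by
    intro z
    have h := hDs z (e 2)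
    rw [sub_sub, sub_eq_zero] at h
    rw [hSapp, h, hDlse2, hSapp, hEapp]
    simp [map_add, map_smul]
  have hEe2 : E (e 2) = (2 * c) • e 2 := by
    rw [hEapp, hDlse2, ← add_smul]
    ring_nf
  have hSe2 : S (e 2) = 0 := hαalt (e 2)
  have hSE0 : ∀ (z : g) (t : ℝ), E z = t • e 2 → S z = 0 := by
    intro z t h
    apply hDasinj
    rw [hkey, h, map_smul, hSe2, smul_zero, map_zero]
  -- matrix entries of E on the quotient by the center
  set m00 : ℝ := e.repr (E (e 0)) 0 with hm00
  set m10 : ℝ := e.repr (E (e 0)) 1 with hm10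
  set g0 : ℝ := e.repr (E (e 0)) 2 with hg0
  set m01 : ℝ := e.repr (E (e 1)) 0 with hm01
  set m11 : ℝ := e.repr (E (e 1)) 1 with hm11
  set g1 : ℝ := e.repr (E (e 1)) 2 with hg1
  have hE0 : E (e 0) = m00 • e 0 + m10 • e 1 + g0 • e 2 := hbasis (E (e 0))
  have hE1 : E (e 1) = m01 • e 0 + m11 • e 1 + g1 • e 2 := hbasis (E (e 1))
  have htrE : m00 + m11 = 3 * c := by
    have h0 : m00 = e.repr (Dls (e 0)) 0 + c := by
      rw [hm00, hEapp]
      simp [Basis.repr_self, Finsupp.add_apply, Finsupp.smul_apply]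
    have h1 : m11 = e.repr (Dls (e 1)) 1 + c := by
      rw [hm11, hEapp]
      simp [Basis.repr_self, Finsupp.add_apply, Finsupp.smul_apply]
    rw [h0, h1]
    linarith [htr]
  -- Cayley–Hamilton-style identity for E modulo the center
  set Φ : Module.End ℝ g :=
    E * E - (3 * c) • E + (m00 * m11 - m01 * m10) • (1 : Module.End ℝ g) with hΦdef
  have hΦapp : ∀ z : g, Φ z = E (E z) - (3 * c) • E z + (m00 * m11 - m01 * m10) • z := by
    intro z
    simp [hΦdef, Module.End.mul_apply]
  have hΦ0 : Φ (e 0) = (m00 * g0 + m10 * g1 + 2 * c * g0 - (3 * c) * g0) • e 2 := by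
    rw [hΦapp, hE0, map_add, map_add, map_smul, map_smul, map_smul, hE0, hE1, hEe2,
      show (3 : ℝ) * c = m00 + m11 from htrE.symm]
    module
  have hΦ1 : Φ (e 1) = (m01 * g0 + m11 * g1 + 2 * c * g1 - (3 * c) * g1) • e 2 := by
    rw [hΦapp, hE1, map_add, map_add, map_smul, map_smul, map_smul, hE0, hE1, hEe2,
      show (3 : ℝ) * c = m00 + m11 from htrE.symm]
    module
  have hΦ2 : Φ (e 2) = (2 * c * (2 * c) - (3 * c) * (2 * c) + (m00 * m11 - m01 * m10)) • e 2 := by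
    rw [hΦapp, hEe2, map_smul, hEe2]
    module
  have hCH : ∀ z : g, ∃ t : ℝ, Φ z = t • e 2 := by
    intro z
    refine ⟨e.repr z 0 * (m00 * g0 + m10 * g1 + 2 * c * g0 - (3 * c) * g0)
      + e.repr z 1 * (m01 * g0 + m11 * g1 + 2 * c * g1 - (3 * c) * g1)
      + e.repr z 2 * (2 * c * (2 * c) - (3 * c) * (2 * c) + (m00 * m11 - m01 * m10)), ?_⟩
    conv_lhs => rw [hbasis z]
    rw [map_add, map_add, map_smul, map_smul, map_smul, hΦ0, hΦ1, hΦ2]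
    module
  -- pairing computations
  have hpair1 : ∀ z w : g, B (S (Φ z)) (S w) = B (S (E (E z))) (S w)
      - (3 * c) * B (S (E z)) (S w) + (m00 * m11 - m01 * m10) * B (S z) (S w) := by
    intro z w
    rw [hΦapp]
    simp only [map_sub, map_add, map_smul, LinearMap.sub_apply, LinearMap.add_apply,
      LinearMap.smul_apply, smul_eq_mul]
  have hpair2 : ∀ z w : g, B (S z) (S (Φ w)) = B (S z) (S (E (E w)))
      - (3 * c) * B (S z) (S (E w)) + (m00 * m11 - m01 * m10) * B (S z) (S w) := by
    intro z w
    rw [hΦapp]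
    simp only [map_sub, map_add, map_smul, smul_eq_mul]
  have hΦzero1 : ∀ z w : g, B (S (Φ z)) (S w) = 0 := by
    intro z w
    obtain ⟨t, ht⟩ := hCH z
    rw [ht, map_smul, hSe2, smul_zero, map_zero, LinearMap.zero_apply]
  have hΦzero2 : ∀ z w : g, B (S z) (S (Φ w)) = 0 := by
    intro z w
    obtain ⟨t, ht⟩ := hCH w
    rw [ht, map_smul, hSe2, smul_zero, map_zero]
  have keyE : ∀ z w : g, B (S (E z)) (S w) = - B (S z) (S (E w)) := by
    intro z w
    rw [← hkey z, ← hkey w]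
    exact hskew _ _
  -- the crucial vanishing on the range of E
  have hβE : ∀ z w : g, B (S (E z)) (S w) = 0 := by
    intro z w
    have h1 := hpair1 z w
    rw [hΦzero1 z w] at h1
    have h2 := hpair2 z w
    rw [hΦzero2 z w] at h2
    have k1 := keyE (E z) w
    have k2 := keyE z (E w)
    have k3 := keyE z w
    have h6 : (6 * c) * (B (S (E z)) (S w)) = 0 := by
      linear_combination h1 - h2 + k1 - k2 + (3 * c) * k3
    have h6c : (6 : ℝ) * c ≠ 0 := mul_ne_zero (by norm_num) hcne
    exact (mul_eq_zero.mp h6).resolve_left h6c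
  -- total vanishing
  have hβ : ∀ z w : g, B (S z) (S w) = 0 := by
    intro z w
    have h1 := hpair1 z w
    rw [hΦzero1 z w, hβE (E z) w, hβE z w] at h1
    by_cases hδ : m00 * m11 - m01 * m10 = 0
    · obtain ⟨t, ht⟩ := hCH z
      rw [hΦapp, hδ, zero_smul, add_zero] at ht
      have hEEz : E (E z) = t • e 2 + (3 * c) • E z := eq_add_of_sub_eq ht
      have h3c : (3 : ℝ) * c ≠ 0 := mul_ne_zero (by norm_num) hcne
      have hker : E (z - (3 * c)⁻¹ • E z) = (-((3 * c)⁻¹ * t)) • e 2 := by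
        rw [map_sub, map_smul, hEEz, smul_add, smul_smul, smul_smul, inv_mul_cancel₀ h3c]
        module
      have hSk : S (z - (3 * c)⁻¹ • E z) = 0 := hSE0 _ _ hker
      have hdec : S z = (3 * c)⁻¹ • S (E z) + S (z - (3 * c)⁻¹ • E z) := by
        rw [map_sub, map_smul]
        abel
      rw [hdec, hSk, add_zero, map_smul, LinearMap.smul_apply, hβE z w, smul_zero]
    · have h4 : (m00 * m11 - m01 * m10) * B (S z) (S w) = 0 := by linarith
      exact (mul_eq_zero.mp h4).resolve_left hδ
  -- conclusion
  intro x u y hy v hv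
  rw [hcen y hy, hcen v hv, map_smul (α x), map_smul (α u)]
  have hxu := hβ x u
  rw [hSapp, hSapp] at hxu
  simp only [map_smul, LinearMap.smul_apply, smul_eq_mul, hxu, mul_zero]
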